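/- In the RHO combinator calculus, with D(x,v,w) := d(x,v,w) | fw(v,x) | *(w), the process *_{(x,v,w)}P := m(x, D(x,v,w) | P) | D(x,v,w) reduces in three steps (up to structural congruence) to *_{(x,v,w)}P | P, provided x, v, w are pairwise distinct names. -/
import Mathlib


-- RHO combinator calculus: processes and (quoted) names
mutual
  inductive CProc : Type
    | zero : CProc
    | msg (a : CName) (P : CProc) : CProc
    | d (a b c : CName) : CProc
    | k (a : CName) : CProc
    | fw (a b : CName) : CProc
    | br (a b : CName) : CProc
    | bl (a b : CName) : CProc
    | s (a b c : CName) : CProc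
    | drop (a : CName) : CProc
    | par (P Q : CProc) : CProc
  inductive CName : Type
    | quote (P : CProc) : CName
end

open CProc

/-- Structural congruence: least congruence making `(|,0)` a commutative monoid
and satisfying `*(@(P)) ≡ P`. -/
inductive SC : CProc → CProc → Prop
  | refl (P) : SC P P
  | symm {P Q} : SC P Q → SC Q P
  | trans {P Q R} : SC P Q → SC Q R → SC P R
  | parAssoc (P Q R) : SC (par (par P Q) R) (par P (par Q R))
  | parComm (P Q) : SC (par P Q) (par Q P)
  | parZero (P) : SC (par P zero) P
  | parCong {P P' Q Q'} : SC P P' → SC Q Q' → SC (par P Q) (par P' Q')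
  | msgCong (a) {P Q} : SC P Q → SC (msg a P) (msg a Q)
  | dropQuote (P) : SC (drop (CName.quote P)) P

/-- Single-step reduction of the RHO combinator calculus. -/
inductive Red : CProc → CProc → Prop
  | comm_d (a b c P) : Red (par (d a b c) (msg a P)) (par (msg b P) (msg c P))
  | comm_k (a P) : Red (par (k a) (msg a P)) zero
  | comm_fw (a b P) : Red (par (fw a b) (msg a P)) (msg b P)
  | comm_br (a b P) : Red (par (br a b) (msg a P)) (fw b (CName.quote P))
  | comm_bl (a b P) : Red (par (bl a b) (msg a P)) (fw (CName.quote P) b)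
  | comm_s (a b c P) : Red (par (s a b c) (msg a P)) (fw b c)
  | comm_drop (a P) : Red (par (drop a) (msg a P)) P
  | parCtx {P P'} (Q) : Red P P' → Red (par P Q) (par P' Q)
  | equiv {P P' Q Q'} : SC P P' → Red P' Q' → SC Q' Q → Red P Q

/-- `D(x,v,w) := d(x,v,w) | fw(v,x) | *(w)` -/
def D (x v w : CName) : CProc := par (par (d x v w) (fw v x)) (drop w)

/-- `*_{(x,v,w)} P := m(x, D(x,v,w) | P) | D(x,v,w)` -/
def repl (x v w : CName) (P : CProc) : CProc :=
  par (msg x (par (D x v w) P)) (D x v w)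

lemma sc_lcomm (P Q R : CProc) :
    SC (par P (par Q R)) (par Q (par P R)) :=
  SC.trans (SC.symm (SC.parAssoc P Q R))
    (SC.trans (SC.parCong (SC.parComm P Q) (SC.refl R)) (SC.parAssoc Q P R))

lemma sc_medial (P Q R S : CProc) :
    SC (par (par P Q) (par R S)) (par (par R P) (par Q S)) :=
  SC.trans (SC.parAssoc P Q (par R S))
    (SC.trans (SC.parCong (SC.refl P) (sc_lcomm Q R S))
      (SC.trans (sc_lcomm P R (par Q S)) (SC.symm (SC.parAssoc R P (par Q S)))))

/-- With `x, v, w` pairwise distinct, `*_{(x,v,w)}P` reduces in three steps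
(up to structural congruence) to `*_{(x,v,w)}P | P`. -/
theorem repl_unfolds (x v w : CName) (P : CProc)
    (hxv : x ≠ v) (hxw : x ≠ w) (hvw : v ≠ w) :
    ∃ P₁ P₂ : CProc,
      Red (repl x v w P) P₁ ∧ Red P₁ P₂ ∧ Red P₂ (par (repl x v w P) P) := by
  set Q : CProc := par (D x v w) P with hQ
  set A : CProc := d x v w
  set B : CProc := fw v x
  set C : CProc := drop w
  set M : CProc := msg x Q
  refine ⟨par (par (msg v Q) (msg w Q)) (par B C),
          par (msg x Q) (par (msg w Q) C), ?_, ?_, ?_⟩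
  · -- step 1: d fires
    refine Red.equiv ?_ (Red.parCtx (par B C) (Red.comm_d x v w Q)) (SC.refl _)
    show SC (par M (par (par A B) C)) (par (par A M) (par B C))
    exact SC.trans (SC.parCong (SC.refl M) (SC.parAssoc A B C))
      (SC.trans (sc_lcomm M A (par B C)) (SC.symm (SC.parAssoc A M (par B C))))
  · -- step 2: fw fires
    refine Red.equiv (sc_medial (msg v Q) (msg w Q) B C)
      (Red.parCtx (par (msg w Q) C) (Red.comm_fw v x Q)) (SC.refl _)
  · -- step 3: drop fires
    refine Red.equiv ?_ (Red.parCtx (msg x Q) (Red.comm_drop w Q)) ?_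
    · exact SC.trans (SC.parCong (SC.refl (msg x Q)) (SC.parComm (msg w Q) C))
        (SC.parComm (msg x Q) (par C (msg w Q)))
    · show SC (par Q (msg x Q)) (par (repl x v w P) P)
      exact SC.trans (SC.parComm Q (msg x Q))
        (SC.symm (SC.parAssoc (msg x Q) (D x v w) P))
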